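/- Let G be a bipartite graph with parts V (variable nodes) and C (constraint nodes) in which every variable node has degree exactly d ≥ 2, and suppose the girth of G is at least g, where g is even and g ≥ 6. Let x : V → ℝ be nonnegative and suppose that for every constraint node c ∈ C and every variable node v adjacent to c, one has x_v ≤ Σ_{w adjacent to c, w ≠ v} x_w. Then for every v₀ ∈ V, T(d,g) · x_{v₀} ≤ Σ_{v ∈ V} x_v. -/

import Mathlib

open scoped Classical

/-- The simple graph on the disjoint union `V ⊕ C` associated to a bipartite adjacency
relation between variable nodes `V` and constraint nodes `C`. -/
def bip {V C : Type*} (adj : V → C → Prop) : SimpleGraph (V ⊕ C) where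
  Adj x y :=
    (∃ v c, x = Sum.inl v ∧ y = Sum.inr c ∧ adj v c) ∨
    (∃ v c, x = Sum.inr c ∧ y = Sum.inl v ∧ adj v c)
  symm := by
    constructor
    rintro x y (⟨v, c, hx, hy, h⟩ | ⟨v, c, hx, hy, h⟩)
    · exact Or.inr ⟨v, c, hy, hx, h⟩
    · exact Or.inl ⟨v, c, hy, hx, h⟩
  loopless := by
    constructor
    rintro x (⟨v, c, hx, hy, h⟩ | ⟨v, c, hx, hy, h⟩) <;> subst hx <;> simp at hy

/-- The tree bound `T(d,g)` for `d ≥ 2` and even girth `g ≥ 6`: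
`T(d,g) = 1 + d + d(d−1) + … + d(d−1)^{(g−6)/4}` when `g ≡ 2 (mod 4)`, and
`T(d,g) = 1 + d + d(d−1) + … + d(d−1)^{(g−8)/4} + (d−1)^{(g−4)/4}` when `g ≡ 0 (mod 4)`. -/
def treeBound (d g : ℕ) : ℕ :=
  if g % 4 = 2 then
    1 + d * ∑ k ∈ Finset.range ((g - 6) / 4 + 1), (d - 1) ^ k
  else
    1 + d * ∑ k ∈ Finset.range ((g - 8) / 4 + 1), (d - 1) ^ k + (d - 1) ^ ((g - 4) / 4)

section Aux
open SimpleGraph Walk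

lemma two_paths_cycle {α : Type*} [DecidableEq α] {G : SimpleGraph α} :
    ∀ {a b : α} (q : G.Walk a b) (p : G.Walk a b), q.IsPath → p.IsPath → p ≠ q →
      ∃ (u : α) (c : G.Walk u u), c.IsCycle ∧ c.length ≤ p.length + q.length := by
  intro a b q
  induction q with
  | nil =>
    intro p _ hp hne
    exact absurd ((isPath_iff_eq_nil (p := p)).mp hp) hne
  | @cons a y b hay q' ih =>
    intro p hq hp hne
    have hq' : q'.IsPath := hq.of_cons
    have ha_not : a ∉ q'.support := by
      rw [cons_isPath_iff] at hq; exact hq.2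
    cases p with
    | nil =>
      simp [isPath_iff_eq_nil] at hq
    | @cons _ x _ hax p' =>
      by_cases hxy : x = y
      · subst hxy
        have hp' : p'.IsPath := hp.of_cons
        have hne' : p' ≠ q' := by
          rintro rfl; exact hne rfl
        obtain ⟨u, c, hc, hlen⟩ := ih p' hq' hp' hne'
        exact ⟨u, c, hc, by simp only [length_cons] at *; omega⟩
      · by_cases hymem : y ∈ (cons hax p').support
        · -- build a cycle from the edge a-y and the initial segment of p up to y
          set p0 : G.Walk a b := cons hax p' with hp0
          have hp1 : (p0.takeUntil y hymem).IsPath := hp.takeUntil hymem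
          have hedge : s(y, a) ∉ (p0.takeUntil y hymem).edges := by
            intro hmem
            have hmem' : s(y, a) ∈ p0.edges := edges_takeUntil_subset _ _ hmem
            rw [hp0, edges_cons] at hmem'
            rcases List.mem_cons.mp hmem' with h1 | h2
            · rw [Sym2.eq_iff] at h1
              rcases h1 with ⟨h2, h3⟩ | ⟨h2, h3⟩
              · exact hay.ne h2.symm
              · exact hxy h2.symm
            · have : y ∈ p'.support ∨ a ∈ p'.support := by
                left
                exact fst_mem_support_of_mem_edges p' h2
              have ha' : a ∈ p'.support := snd_mem_support_of_mem_edges p' h2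
              rw [cons_isPath_iff] at hp
              exact hp.2 ha'
          have hcyc := Path.cons_isCycle
            ⟨p0.takeUntil y hymem, hp1⟩ hay.symm (by simpa using hedge)
          refine ⟨y, _, hcyc, ?_⟩
          have h1 : (p0.takeUntil y hymem).length ≤ p0.length :=
            length_takeUntil_le _ _
          simp only [length_cons] at *
          omega
        · -- extend p by the edge y-a and recurse
          have hp2 : (cons hay.symm (cons hax p')).IsPath :=
            hp.cons hymem
          have hne2 : cons hay.symm (cons hax p') ≠ q' := by
            intro heq
            apply ha_not
            have : a ∈ (cons hay.symm (cons hax p')).support := by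
              simp
            rwa [heq] at this
          obtain ⟨u, c, hc, hlen⟩ := ih _ hq' hp2 hne2
          exact ⟨u, c, hc, by simp only [length_cons] at *; omega⟩

end Aux

section Aux2
open SimpleGraph

lemma dist_le_of_mem_support {α : Type*} {G : SimpleGraph α} {o u w : α}
    (p : G.Walk o u) (h : w ∈ p.support) : G.dist o w ≤ p.length := by
  classical
  exact le_trans (SimpleGraph.dist_le (p.takeUntil w h)) (SimpleGraph.Walk.length_takeUntil_le p h)

lemma dist_adj_le {α : Type*} {G : SimpleGraph α} {o u w : α}
    (h : G.Reachable o u) (ha : G.Adj u w) : G.dist o w ≤ G.dist o u + 1 := by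
  obtain ⟨p, _, hlen⟩ := h.exists_path_of_dist
  have := SimpleGraph.dist_le (p.concat ha)
  rwa [SimpleGraph.Walk.length_concat, hlen] at this

lemma unique_parent {α : Type*} [DecidableEq α] {G : SimpleGraph α} {g : ℕ}
    (hgirth : (g : ℕ∞) ≤ G.egirth) {o u p q : α}
    (ht : 2 * G.dist o u + 2 ≤ g)
    (hp : G.Adj u p) (hq : G.Adj u q)
    (hrp : G.Reachable o p) (hrq : G.Reachable o q)
    (hdp : G.dist o p + 1 = G.dist o u) (hdq : G.dist o q + 1 = G.dist o u) :
    p = q := by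
  by_contra hne
  obtain ⟨P, hPp, hPl⟩ := hrp.exists_path_of_dist
  obtain ⟨Q, hQp, hQl⟩ := hrq.exists_path_of_dist
  have hunot : ∀ (z : α) (W : G.Walk o z), W.length + 1 = G.dist o u → u ∉ W.support := by
    intro z W hW hmem
    have := dist_le_of_mem_support W hmem
    omega
  have hW1 : (Walk.cons hp P.reverse).IsPath := by
    refine hPp.reverse.cons ?_
    rw [Walk.support_reverse, List.mem_reverse]
    exact hunot p P (by omega) ∘ id
  have hW2 : (Walk.cons hq Q.reverse).IsPath := by
    refine hQp.reverse.cons ?_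
    rw [Walk.support_reverse, List.mem_reverse]
    exact hunot q Q (by omega) ∘ id
  have hneW : Walk.cons hp P.reverse ≠ Walk.cons hq Q.reverse := by
    intro heq
    have hsupp := congrArg Walk.support heq
    rw [Walk.support_cons, Walk.support_cons, P.reverse.support_eq_cons,
      Q.reverse.support_eq_cons] at hsupp
    exact hne (by injection (List.cons.inj hsupp).2 with h _)
  obtain ⟨z, c, hc, hlen⟩ := two_paths_cycle _ _ hW2 hW1 hneW
  have hg_le : (g : ℕ∞) ≤ c.length := (le_egirth.mp hgirth) z c hc
  have : g ≤ c.length := by exact_mod_cast hg_le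
  have h1 : (Walk.cons hp P.reverse).length = G.dist o p + 1 := by
    rw [Walk.length_cons, Walk.length_reverse, hPl]
  have h2 : (Walk.cons hq Q.reverse).length = G.dist o q + 1 := by
    rw [Walk.length_cons, Walk.length_reverse, hQl]
  omega

lemma exists_parent {α : Type*} {G : SimpleGraph α} {o u : α}
    (hr : G.Reachable o u) (h1 : 1 ≤ G.dist o u) :
    ∃ p, G.Adj u p ∧ G.Reachable o p ∧ G.dist o p + 1 = G.dist o u := by
  obtain ⟨Q, hQp, hQl⟩ := hr.symm.exists_path_of_dist
  rw [dist_comm] at hQl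
  cases Q with
  | nil => rw [Walk.length_nil] at hQl; omega
  | @cons _ z _ h Q' =>
    rw [Walk.length_cons] at hQl
    have hle : G.dist o z ≤ Q'.length := by
      have h2 := dist_le Q'.reverse
      rwa [Walk.length_reverse] at h2
    have hge : G.dist o u ≤ G.dist o z + 1 := dist_adj_le ⟨Q'.reverse⟩ h.symm
    exact ⟨z, h, ⟨Q'.reverse⟩, by omega⟩

/-- parity marker: variable nodes are 0, constraint nodes are 1 -/
def bpar {V C : Type*} : V ⊕ C → ℕ := Sum.elim (fun _ => 0) (fun _ => 1)

section BipLemmas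
variable {V C : Type*} {adj : V → C → Prop}

lemma bip_adj_inl_inr {v : V} {c : C} : (bip adj).Adj (Sum.inl v) (Sum.inr c) ↔ adj v c := by
  constructor
  · rintro (⟨v', c', hv, hc, h⟩ | ⟨v', c', hv, hc, h⟩)
    · cases hv; cases hc; exact h
    · simp at hv
  · intro h; exact Or.inl ⟨v, c, rfl, rfl, h⟩

lemma bip_adj_inr_inl {v : V} {c : C} : (bip adj).Adj (Sum.inr c) (Sum.inl v) ↔ adj v c := by
  rw [SimpleGraph.adj_comm]; exact bip_adj_inl_inr

lemma bip_adj_par {u w : V ⊕ C} (h : (bip adj).Adj u w) : bpar u + bpar w = 1 := by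
  rcases h with (⟨v, c, hv, hc, _⟩ | ⟨v, c, hv, hc, _⟩) <;> subst hv <;> subst hc <;> rfl

lemma bip_walk_parity {u w : V ⊕ C} (p : (bip adj).Walk u w) :
    (p.length + bpar u + bpar w) % 2 = 0 := by
  induction p with
  | nil => rw [SimpleGraph.Walk.length_nil]; omega
  | cons h p ih =>
    have h1 := bip_adj_par h
    rw [SimpleGraph.Walk.length_cons]
    omega

lemma bip_nbr_inl {v : V} {u : V ⊕ C}
    (h : (bip adj).Adj (Sum.inl v) u) : ∃ c, u = Sum.inr c ∧ adj v c := by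
  rcases h with ⟨v', c', h1, h2, h3⟩ | ⟨v', c', h1, h2, h3⟩
  · exact ⟨c', h2, by cases h1; exact h3⟩
  · simp at h1

end BipLemmas
end Aux2

theorem stmt_18 (V C : Type*) [Fintype V] [Fintype C] (adj : V → C → Prop)
    (d g : ℕ) (hd : 2 ≤ d) (hg6 : 6 ≤ g) (hge : Even g)
    -- every variable node has degree exactly d
    (hdeg : ∀ v : V, Nat.card {c : C // adj v c} = d)
    -- the girth of the bipartite graph is at least g
    (hgirth : (g : ℕ∞) ≤ (bip adj).egirth)
    (x : V → ℝ) (hx : ∀ v, 0 ≤ x v)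
    -- at every constraint node, each neighbour's value is at most the sum of the others
    (hcons : ∀ c : C, ∀ v : V, adj v c →
      x v ≤ ∑ w ∈ Finset.univ.filter (fun w => adj w c ∧ w ≠ v), x w) :
    ∀ v₀ : V, (treeBound d g : ℝ) * x v₀ ≤ ∑ v : V, x v := by
  intro v₀
  set o : V ⊕ C := Sum.inl v₀ with ho
  set D : V ⊕ C → ℕ := fun u => (bip adj).dist o u with hD
  set Rc : V ⊕ C → Prop := fun u => (bip adj).Reachable o u with hRc
  set A : ℕ → Finset V :=
    fun k => Finset.univ.filter (fun v => Rc (Sum.inl v) ∧ D (Sum.inl v) = 2*k) with hA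
  set Bf : ℕ → Finset C :=
    fun k => Finset.univ.filter (fun c => Rc (Sum.inr c) ∧ D (Sum.inr c) = 2*k+1) with hBf
  set S : ℕ → ℝ := fun k => ∑ v ∈ A k, x v with hS
  have hmemA : ∀ k v, v ∈ A k ↔ (Rc (Sum.inl v) ∧ D (Sum.inl v) = 2*k) := by
    intro k v; rw [hA]; simp
  have hmemB : ∀ k c, c ∈ Bf k ↔ (Rc (Sum.inr c) ∧ D (Sum.inr c) = 2*k+1) := by
    intro k c; rw [hBf]; simp
  have hdegF : ∀ w : V, (Finset.univ.filter (fun c => adj w c)).card = d := by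
    intro w
    have h := hdeg w
    rwa [Nat.card_eq_fintype_card, Fintype.card_subtype] at h
  have hSnn : ∀ k, 0 ≤ S k := fun k => Finset.sum_nonneg (fun v _ => hx v)
  -- parity of distances
  have hpar : ∀ u, Rc u → (D u + bpar u) % 2 = 0 := by
    intro u hu
    obtain ⟨p, -, hl⟩ := hu.exists_path_of_dist
    have h2 := bip_walk_parity p
    have h3 : bpar (o : V ⊕ C) = 0 := rfl
    have h4 : D u = p.length := hl.symm
    omega
  -- the basic step lemma for distances along edges
  have hstep : ∀ u w, Rc u → (bip adj).Adj u w →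
      Rc w ∧ (D w = D u + 1 ∨ D u = D w + 1) := by
    intro u w hu ha
    have hw : Rc w := hu.trans ha.reachable
    have h1 : D w ≤ D u + 1 := dist_adj_le hu ha
    have h2 : D u ≤ D w + 1 := dist_adj_le hw ha.symm
    have h3 := hpar u hu
    have h4 := hpar w hw
    have h5 := bip_adj_par ha
    exact ⟨hw, by omega⟩
  have hD0 : ∀ u, Rc u → (D u = 0 ↔ u = o) := by
    intro u hu
    constructor
    · intro h
      rcases SimpleGraph.dist_eq_zero_iff_eq_or_not_reachable.mp h with h' | h'
      · exact h'.symm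
      · exact absurd hu h'
    · rintro rfl; exact SimpleGraph.dist_self
  have huniqP : ∀ (u p q : V ⊕ C), Rc u → 2 * D u + 2 ≤ g → (bip adj).Adj u p →
      (bip adj).Adj u q → D p + 1 = D u → D q + 1 = D u → p = q := by
    intro u p q hu hgu hap haq hdp hdq
    exact unique_parent hgirth hgu hap haq (hstep u p hu hap).1 (hstep u q hu haq).1 hdp hdq
  -- Step 1 : at a child constraint, the neighbours other than the parent are on the next level
  have step1 : ∀ k, 4*k+4 ≤ g → ∀ v c, v ∈ A k → adj v c → D (Sum.inr c) = 2*k+1 →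
      x v ≤ ∑ w ∈ Finset.univ.filter (fun w => adj w c ∧ w ∈ A (k+1)), x w := by
    intro k hk v c hv hvc hDc
    rw [hmemA] at hv
    refine le_trans (hcons c v hvc) (Finset.sum_le_sum_of_subset_of_nonneg ?_
      (fun i _ _ => hx i))
    intro w hw
    rw [Finset.mem_filter] at hw ⊢
    obtain ⟨-, hwc, hwv⟩ := hw
    refine ⟨Finset.mem_univ _, hwc, ?_⟩
    have hRcc : Rc (Sum.inr c) := (hstep _ _ hv.1 (bip_adj_inl_inr.mpr hvc)).1
    have hw' := hstep (Sum.inr c) (Sum.inl w) hRcc (bip_adj_inr_inl.mpr hwc)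
    rw [hmemA]
    refine ⟨hw'.1, ?_⟩
    rcases hw'.2 with h | h
    · omega
    · -- w would be a second parent of c
      exfalso
      apply hwv
      have := huniqP (Sum.inr c) (Sum.inl w) (Sum.inl v) hRcc (by omega)
        (bip_adj_inr_inl.mpr hwc) (bip_adj_inr_inl.mpr hvc) (by omega) (by omega)
      exact Sum.inl.inj this
  -- Step 2 : each variable node on level k has the right number of child constraints
  have step2 : ∀ k, 4*k+4 ≤ g → ∀ v, v ∈ A k →
      (if k = 0 then (d:ℝ) else (d:ℝ)-1) * x v ≤
        ∑ c ∈ Finset.univ.filter (fun c => adj v c ∧ D (Sum.inr c) = 2*k+1),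
          ∑ w ∈ Finset.univ.filter (fun w => adj w c ∧ w ∈ A (k+1)), x w := by
    intro k hk v hv
    have hvA := hv
    rw [hmemA] at hv
    set Ch : Finset C := Finset.univ.filter (fun c => adj v c ∧ D (Sum.inr c) = 2*k+1)
      with hCh
    have hcard : Ch.card = (if k = 0 then d else d - 1) := by
      by_cases hk0 : k = 0
      · subst hk0
        rw [if_pos rfl]
        have hvo : Sum.inl v = o := by
          rw [← hD0 _ hv.1]; omega
        have : Ch = Finset.univ.filter (fun c => adj v c) := by
          ext c
          rw [hCh, Finset.mem_filter, Finset.mem_filter]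
          constructor
          · rintro ⟨h1, h2, -⟩; exact ⟨h1, h2⟩
          · rintro ⟨h1, h2⟩
            refine ⟨h1, h2, ?_⟩
            have hadj : (bip adj).Adj (Sum.inl v) (Sum.inr c) := bip_adj_inl_inr.mpr h2
            have h3 := hstep _ _ hv.1 hadj
            have h4 : ¬ (Sum.inr c = o) := by rw [ho]; simp
            have h5 : D (Sum.inr c) ≠ 0 := fun h => h4 ((hD0 _ h3.1).mp h)
            omega
        rw [this, hdegF]
      · rw [if_neg hk0]
        have hk1 : 1 ≤ k := Nat.one_le_iff_ne_zero.mpr hk0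
        have h1 : 1 ≤ D (Sum.inl v) := by omega
        obtain ⟨u', hadj', hrc', hdu'⟩ := exists_parent hv.1 h1
        replace hdu' : D u' + 1 = D (Sum.inl v) := hdu'
        obtain ⟨c₀, rfl, hc₀⟩ := bip_nbr_inl hadj'
        have : Ch = (Finset.univ.filter (fun c => adj v c)).erase c₀ := by
          ext c
          rw [hCh, Finset.mem_filter, Finset.mem_erase, Finset.mem_filter]
          constructor
          · rintro ⟨h1', h2, h3⟩
            refine ⟨?_, h1', h2⟩
            rintro rfl
            omega
          · rintro ⟨hne, -, h2⟩
            refine ⟨Finset.mem_univ _, h2, ?_⟩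
            have hadj : (bip adj).Adj (Sum.inl v) (Sum.inr c) := bip_adj_inl_inr.mpr h2
            have h3 := hstep _ _ hv.1 hadj
            rcases h3.2 with h | h
            · omega
            · exfalso
              apply hne
              have := huniqP (Sum.inl v) (Sum.inr c) (Sum.inr c₀) hv.1 (by omega)
                hadj hadj' (by omega) (by omega)
              exact Sum.inr.inj this
        rw [this, Finset.card_erase_of_mem (by simp [hc₀]), hdegF]
    have hcoef : (if k = 0 then (d:ℝ) else (d:ℝ)-1) = ((if k = 0 then d else d - 1 : ℕ) : ℝ) := by
      by_cases hk0 : k = 0 <;> simp [hk0]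
      rw [Nat.cast_sub (by omega)]
      simp
    calc (if k = 0 then (d:ℝ) else (d:ℝ)-1) * x v
        = (Ch.card : ℝ) * x v := by rw [hcoef, hcard]
      _ = ∑ _c ∈ Ch, x v := by rw [Finset.sum_const, nsmul_eq_mul]
      _ ≤ ∑ c ∈ Ch, ∑ w ∈ Finset.univ.filter (fun w => adj w c ∧ w ∈ A (k+1)), x w := by
          refine Finset.sum_le_sum ?_
          intro c hc
          rw [hCh, Finset.mem_filter] at hc
          exact step1 k hk v c hvA hc.2.1 hc.2.2
  -- Step 3 : summing over a level
  have step3 : ∀ k, 4*k+4 ≤ g →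
      (if k = 0 then (d:ℝ) else (d:ℝ)-1) * S k ≤
        ∑ c ∈ Bf k, ∑ w ∈ Finset.univ.filter (fun w => adj w c ∧ w ∈ A (k+1)), x w := by
    intro k hk
    set Y : C → ℝ := fun c => ∑ w ∈ Finset.univ.filter (fun w => adj w c ∧ w ∈ A (k+1)), x w
      with hY
    have hYnn : ∀ c, 0 ≤ Y c := fun c => Finset.sum_nonneg (fun w _ => hx w)
    set Ch : V → Finset C :=
      fun v => Finset.univ.filter (fun c => adj v c ∧ D (Sum.inr c) = 2*k+1) with hCh
    have h1 : (if k = 0 then (d:ℝ) else (d:ℝ)-1) * S k ≤ ∑ v ∈ A k, ∑ c ∈ Ch v, Y c := by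
      rw [hS, Finset.mul_sum]
      exact Finset.sum_le_sum (fun v hv => step2 k hk v hv)
    have hdisj : (↑(A k) : Set V).PairwiseDisjoint Ch := by
      intro v hv v' hv' hne
      simp only [Function.onFun]
      rw [Finset.disjoint_left]
      intro c hc hc'
      rw [hCh, Finset.mem_filter] at hc hc'
      apply hne
      rw [Finset.mem_coe, hmemA] at hv hv'
      have hRcc : Rc (Sum.inr c) := (hstep _ _ hv.1 (bip_adj_inl_inr.mpr hc.2.1)).1
      have := huniqP (Sum.inr c) (Sum.inl v) (Sum.inl v') hRcc (by omega)
        (bip_adj_inr_inl.mpr hc.2.1) (bip_adj_inr_inl.mpr hc'.2.1)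
        (by omega) (by omega)
      exact Sum.inl.inj this
    have h2 : ∑ v ∈ A k, ∑ c ∈ Ch v, Y c = ∑ c ∈ (A k).biUnion Ch, Y c :=
      (Finset.sum_biUnion hdisj).symm
    have h3 : (A k).biUnion Ch ⊆ Bf k := by
      intro c hc
      rw [Finset.mem_biUnion] at hc
      obtain ⟨v, hv, hc⟩ := hc
      rw [hCh, Finset.mem_filter] at hc
      rw [hmemA] at hv
      rw [hmemB]
      exact ⟨(hstep _ _ hv.1 (bip_adj_inl_inr.mpr hc.2.1)).1, hc.2.2⟩
    calc (if k = 0 then (d:ℝ) else (d:ℝ)-1) * S k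
        ≤ ∑ v ∈ A k, ∑ c ∈ Ch v, Y c := h1
      _ = ∑ c ∈ (A k).biUnion Ch, Y c := h2
      _ ≤ ∑ c ∈ Bf k, Y c :=
          Finset.sum_le_sum_of_subset_of_nonneg h3 (fun c _ _ => hYnn c)
  -- Step 4 : rewriting the double sum by the number of parents
  have step4 : ∀ k, ∑ c ∈ Bf k, ∑ w ∈ Finset.univ.filter (fun w => adj w c ∧ w ∈ A (k+1)), x w
      = ∑ w ∈ A (k+1), (((Bf k).filter (fun c => adj w c)).card : ℝ) * x w := by
    intro k
    have hinner : ∀ c, ∑ w ∈ Finset.univ.filter (fun w => adj w c ∧ w ∈ A (k+1)), x w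
        = ∑ w ∈ A (k+1), if adj w c then x w else 0 := by
      intro c
      rw [← Finset.sum_filter]
      congr 1
      ext w
      simp only [Finset.mem_filter, Finset.mem_univ, true_and]
      tauto
    simp_rw [hinner]
    rw [Finset.sum_comm]
    refine Finset.sum_congr rfl ?_
    intro w _
    rw [← Finset.sum_filter, Finset.sum_const, nsmul_eq_mul]
  -- multiplicity bounds
  have hmult_d : ∀ k (w : V), (((Bf k).filter (fun c => adj w c)).card : ℝ) ≤ d := by
    intro k w
    have : ((Bf k).filter (fun c => adj w c)).card ≤ d := by
      rw [← hdegF w]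
      refine Finset.card_le_card ?_
      intro c hc
      rw [Finset.mem_filter] at hc
      simp [hc.2]
    exact_mod_cast this
  have hmult_one : ∀ k (w : V), 4*k+6 ≤ g → w ∈ A (k+1) →
      (((Bf k).filter (fun c => adj w c)).card : ℝ) ≤ 1 := by
    intro k w hk hw
    have : ((Bf k).filter (fun c => adj w c)).card ≤ 1 := by
      rw [Finset.card_le_one]
      intro c hc c' hc'
      rw [Finset.mem_filter, hmemB] at hc hc'
      rw [hmemA] at hw
      have := huniqP (Sum.inl w) (Sum.inr c) (Sum.inr c') hw.1 (by omega)
        (bip_adj_inl_inr.mpr hc.2) (bip_adj_inl_inr.mpr hc'.2) (by omega) (by omega)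
      exact Sum.inr.inj this
    exact_mod_cast this
  -- the two level-to-level inequalities
  have hfull : ∀ k, 4*k+6 ≤ g →
      (if k = 0 then (d:ℝ) else (d:ℝ)-1) * S k ≤ S (k+1) := by
    intro k hk
    refine le_trans (step3 k (by omega)) ?_
    rw [step4 k, hS]
    refine Finset.sum_le_sum ?_
    intro w hw
    have h1 := hmult_one k w hk hw
    nlinarith [hx w, h1]
  have hpartial : ∀ k, 4*k+4 ≤ g →
      (if k = 0 then (d:ℝ) else (d:ℝ)-1) * S k ≤ (d:ℝ) * S (k+1) := by
    intro k hk
    refine le_trans (step3 k hk) ?_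
    rw [step4 k, hS, Finset.mul_sum]
    refine Finset.sum_le_sum ?_
    intro w hw
    have h1 := hmult_d k w
    nlinarith [hx w, h1]
  -- level 0
  have hS0 : S 0 = x v₀ := by
    have : A 0 = {v₀} := by
      ext v
      rw [hmemA, Finset.mem_singleton]
      constructor
      · rintro ⟨h1, h2⟩
        have h3 : Sum.inl v = o := (hD0 _ h1).mp (by omega)
        exact Sum.inl.inj h3
      · rintro rfl
        exact ⟨SimpleGraph.Reachable.refl o, SimpleGraph.dist_self⟩
    show ∑ v ∈ A 0, x v = x v₀
    rw [this, Finset.sum_singleton]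
  -- geometric growth of level sums
  have hd1 : (0:ℝ) ≤ (d:ℝ) - 1 := by
    have : (2:ℝ) ≤ d := by exact_mod_cast hd
    linarith
  have hchain : ∀ j, 4*j+6 ≤ g → (d:ℝ) * ((d:ℝ)-1)^j * x v₀ ≤ S (j+1) := by
    intro j
    induction j with
    | zero =>
      intro hj
      have h := hfull 0 hj
      rw [if_pos rfl, hS0] at h
      simpa using h
    | succ j ih =>
      intro hj
      have h1 : (d:ℝ) * ((d:ℝ)-1)^j * x v₀ ≤ S (j+1) := ih (by omega)
      have h2 := hfull (j+1) hj
      rw [if_neg (by omega)] at h2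
      calc (d:ℝ) * ((d:ℝ)-1)^(j+1) * x v₀
          = ((d:ℝ)-1) * ((d:ℝ) * ((d:ℝ)-1)^j * x v₀) := by ring
        _ ≤ ((d:ℝ)-1) * S (j+1) := mul_le_mul_of_nonneg_left h1 hd1
        _ ≤ S (j+2) := h2
  -- levels are disjoint and sum below the total
  have htot : ∀ n, ∑ k ∈ Finset.range n, S k ≤ ∑ v : V, x v := by
    intro n
    have hdisj : (↑(Finset.range n) : Set ℕ).PairwiseDisjoint A := by
      intro j hj k hk hne
      simp only [Function.onFun]
      rw [Finset.disjoint_left]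
      intro v hv hv'
      rw [hmemA] at hv hv'
      omega
    rw [hS]
    calc ∑ k ∈ Finset.range n, ∑ v ∈ A k, x v
        = ∑ v ∈ (Finset.range n).biUnion A, x v := (Finset.sum_biUnion hdisj).symm
      _ ≤ ∑ v : V, x v :=
          Finset.sum_le_sum_of_subset_of_nonneg (Finset.subset_univ _) (fun v _ _ => hx v)
  have hx0 : 0 ≤ x v₀ := hx v₀
  -- final assembly
  have hg2 : g % 2 = 0 := Nat.even_iff.mp hge
  rcases (by omega : g % 4 = 0 ∨ g % 4 = 2) with hm | hm
  · -- g ≡ 0 (mod 4)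
    have hg8 : 8 ≤ g := by omega
    set m := (g - 8) / 4 with hmdef
    have hgm : g = 4*m + 8 := by omega
    have hTB : treeBound d g = 1 + d * ∑ k ∈ Finset.range (m+1), (d-1)^k + (d-1)^(m+1) := by
      rw [treeBound, if_neg (by omega)]
      congr 2 <;> omega
    have hTBr : (treeBound d g : ℝ) =
        1 + (d:ℝ) * ∑ k ∈ Finset.range (m+1), ((d:ℝ)-1)^k + ((d:ℝ)-1)^(m+1) := by
      rw [hTB]
      push_cast [Nat.cast_sub (by omega : 1 ≤ d)]
      ring
    have hsum : ∑ k ∈ Finset.range (m+3), S k ≤ ∑ v : V, x v := htot (m+3)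
    have hexp : ∑ k ∈ Finset.range (m+3), S k
        = (S 0 + ∑ j ∈ Finset.range (m+1), S (j+1)) + S (m+2) := by
      rw [Finset.sum_range_succ, Finset.sum_range_succ']
      ring
    have hdpos : (0:ℝ) < d := by
      have : (2:ℝ) ≤ d := by exact_mod_cast hd
      linarith
    have hlast : ((d:ℝ)-1)^(m+1) * x v₀ ≤ S (m+2) := by
      have hp := hpartial (m+1) (by omega)
      rw [if_neg (by omega)] at hp
      have hc := hchain m (by omega)
      have h5 : (d:ℝ) * (((d:ℝ)-1)^(m+1) * x v₀) ≤ (d:ℝ) * S (m+2) := by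
        calc (d:ℝ) * (((d:ℝ)-1)^(m+1) * x v₀)
            = ((d:ℝ)-1) * ((d:ℝ) * ((d:ℝ)-1)^m * x v₀) := by ring
          _ ≤ ((d:ℝ)-1) * S (m+1) := mul_le_mul_of_nonneg_left hc hd1
          _ ≤ (d:ℝ) * S (m+2) := hp
      exact le_of_mul_le_mul_left h5 hdpos
    have hbound : (treeBound d g : ℝ) * x v₀ ≤ ∑ k ∈ Finset.range (m+3), S k := by
      rw [hTBr, hexp, hS0]
      have h1 : ∀ j ∈ Finset.range (m+1), (d:ℝ) * ((d:ℝ)-1)^j * x v₀ ≤ S (j+1) := by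
        intro j hj
        rw [Finset.mem_range] at hj
        exact hchain j (by omega)
      have h2 : ∑ j ∈ Finset.range (m+1), (d:ℝ) * ((d:ℝ)-1)^j * x v₀
          ≤ ∑ j ∈ Finset.range (m+1), S (j+1) := Finset.sum_le_sum h1
      have h3 : (1 + (d:ℝ) * ∑ k ∈ Finset.range (m+1), ((d:ℝ)-1)^k + ((d:ℝ)-1)^(m+1)) * x v₀
          = (x v₀ + ∑ j ∈ Finset.range (m+1), (d:ℝ) * ((d:ℝ)-1)^j * x v₀)
            + ((d:ℝ)-1)^(m+1) * x v₀ := by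
        rw [add_mul, add_mul, one_mul, Finset.mul_sum, Finset.sum_mul]
      rw [h3]
      linarith
    linarith
  · -- g ≡ 2 (mod 4)
    set m := (g - 6) / 4 with hmdef
    have hgm : g = 4*m + 6 := by omega
    have hTB : treeBound d g = 1 + d * ∑ k ∈ Finset.range (m+1), (d-1)^k := by
      rw [treeBound, if_pos hm]
    have hTBr : (treeBound d g : ℝ) = 1 + (d:ℝ) * ∑ k ∈ Finset.range (m+1), ((d:ℝ)-1)^k := by
      rw [hTB]
      push_cast [Nat.cast_sub (by omega : 1 ≤ d)]
      ring
    have hsum : ∑ k ∈ Finset.range (m+2), S k ≤ ∑ v : V, x v := htot (m+2)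
    have hexp : ∑ k ∈ Finset.range (m+2), S k
        = S 0 + ∑ j ∈ Finset.range (m+1), S (j+1) := by
      rw [Finset.sum_range_succ']
      ring
    have hbound : (treeBound d g : ℝ) * x v₀ ≤ ∑ k ∈ Finset.range (m+2), S k := by
      rw [hTBr, hexp, hS0]
      have h1 : ∀ j ∈ Finset.range (m+1), (d:ℝ) * ((d:ℝ)-1)^j * x v₀ ≤ S (j+1) := by
        intro j hj
        rw [Finset.mem_range] at hj
        exact hchain j (by omega)
      have h2 : ∑ j ∈ Finset.range (m+1), (d:ℝ) * ((d:ℝ)-1)^j * x v₀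
          ≤ ∑ j ∈ Finset.range (m+1), S (j+1) := Finset.sum_le_sum h1
      have h3 : (1 + (d:ℝ) * ∑ k ∈ Finset.range (m+1), ((d:ℝ)-1)^k) * x v₀
          = x v₀ + ∑ j ∈ Finset.range (m+1), (d:ℝ) * ((d:ℝ)-1)^j * x v₀ := by
        rw [add_mul, one_mul, Finset.mul_sum, Finset.sum_mul]
      rw [h3]
      linarith
    linarith
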